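/- In hyperbolic space, if a geodesic triangle has a vertex C where the interior angle is θ, and d is the distance from C to the opposite side, then sin(θ/2)·cosh(d) ≤ 1. -/

import Mathlib

set_option maxHeartbeats 2000000

open Real UpperHalfPlane Metric
open scoped UpperHalfPlane


lemma key_ineq (x y p q σ : ℝ) (hy : 0 < y) (hp : 0 < p) (hq : 0 < q) (hpq : p ≤ q)
    (hσ0 : 0 ≤ σ)
    (hσ : σ ^ 2 = (((x^2+y^2+q^2)/(2*y*q))^2 - 1) * (((x^2+y^2+p^2)/(2*y*p))^2 - 1)) :
    ∃ s : ℝ, p ≤ s ∧ s ≤ q ∧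
      (σ + (p^2+q^2)/(2*p*q) - ((x^2+y^2+q^2)/(2*y*q)) * ((x^2+y^2+p^2)/(2*y*p)))
        * ((x^2+y^2+s^2)/(2*y*s))^2 ≤ 2 * σ := by
  set g : ℝ := σ * (4*y^2*p*q) with hgdef
  have hg0 : 0 ≤ g := by positivity
  have hg2 : g^2 = ((x^2+y^2+q^2)^2 - 4*y^2*q^2) * ((x^2+y^2+p^2)^2 - 4*y^2*p^2) := by
    have h16 : g^2 = σ^2 * (16*y^4*p^2*q^2) := by rw [hgdef]; ring
    rw [h16, hσ]
    field_simp
    ring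
  have red : ∀ s : ℝ, 0 < s →
      (g + 2*y^2*(p^2+q^2) - (x^2+y^2+q^2)*(x^2+y^2+p^2)) * (x^2+y^2+s^2)^2
        ≤ 8*g*y^2*s^2 →
      (σ + (p^2+q^2)/(2*p*q) - ((x^2+y^2+q^2)/(2*y*q)) * ((x^2+y^2+p^2)/(2*y*p)))
        * ((x^2+y^2+s^2)/(2*y*s))^2 ≤ 2 * σ := by
    intro s hs hmain
    have hexp : (σ + (p^2+q^2)/(2*p*q) - ((x^2+y^2+q^2)/(2*y*q)) * ((x^2+y^2+p^2)/(2*y*p)))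
        * ((x^2+y^2+s^2)/(2*y*s))^2 - 2 * σ
        = ((g + 2*y^2*(p^2+q^2) - (x^2+y^2+q^2)*(x^2+y^2+p^2)) * (x^2+y^2+s^2)^2
            - 8*g*y^2*s^2) / (16*y^4*p*q*s^2) := by
      rw [hgdef]
      field_simp
      ring
    have hden : (0:ℝ) < 16*y^4*p*q*s^2 := by positivity
    rw [← sub_nonpos, hexp]
    exact div_nonpos_of_nonpos_of_nonneg (sub_nonpos.2 hmain) hden.le
  have huv : g ≤ (x^2+y^2+q^2)*(x^2+y^2+p^2) := by
    have hv2 : 4*y^2*q^2 ≤ (x^2+y^2+q^2)^2 := by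
      nlinarith [sq_nonneg (y-q), sq_nonneg (y+q), sq_nonneg x]
    have hu2 : 4*y^2*p^2 ≤ (x^2+y^2+p^2)^2 := by
      nlinarith [sq_nonneg (y-p), sq_nonneg (y+p), sq_nonneg x]
    have h1 : g^2 ≤ ((x^2+y^2+q^2)*(x^2+y^2+p^2))^2 := by
      nlinarith [hg2, mul_nonneg (by positivity : (0:ℝ) ≤ 4*y^2*q^2) (sub_nonneg.2 hu2),
        sq_nonneg (y*p*(x^2+y^2+q^2))]
    have h2 : (0:ℝ) ≤ (x^2+y^2+q^2)*(x^2+y^2+p^2) := by positivity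
    nlinarith [h1, hg0, h2]
  have hgR : -((x^2+y^2-p^2)*(x^2+y^2-q^2)+4*p*q*x^2) ≤ g := by
    have hI : g^2 - ((x^2+y^2-p^2)*(x^2+y^2-q^2)+4*p*q*x^2)^2
        = (2*x*(q-p)*((x^2+y^2)+p*q))^2 := by rw [hg2]; ring
    nlinarith [hI, hg0, sq_nonneg (2*x*(q-p)*((x^2+y^2)+p*q))]
  set rr : ℝ := Real.sqrt (x^2+y^2) with hrr
  have hr2 : rr^2 = x^2+y^2 := Real.sq_sqrt (by positivity)
  have hrpos : 0 < rr := Real.sqrt_pos.2 (by positivity)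
  rcases le_total rr p with hc1 | hc1
  · -- s = p, r2 ≤ p^2
    have hr2p : x^2+y^2 ≤ p^2 := by nlinarith [hr2, hc1, hrpos]
    have hpq2 : p^2 ≤ q^2 := by nlinarith
    refine ⟨p, le_refl p, hpq, red p hp ?_⟩
    rcases le_total ((x^2+y^2+p^2)^2) (8*y^2*p^2) with hW | hW
    · have hP : 0 ≤ (x^2+y^2+q^2)*(x^2+y^2+p^2) - 2*y^2*(p^2+q^2) := by
        nlinarith [mul_nonneg (sub_nonneg.2 hr2p) (sub_nonneg.2 (hr2p.trans hpq2)),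
          sq_nonneg (x*(q-p)), mul_pos hp hq, sq_nonneg x]
      nlinarith [mul_nonneg hg0 (sub_nonneg.2 hW), mul_nonneg hP (sq_nonneg (x^2+y^2+p^2))]
    · have base : (p^2+q^2)*(x^2+y^2+p^2) ≤ 4*p^2*(x^2+y^2+q^2) := by
        nlinarith [mul_nonneg (sub_nonneg.2 hr2p) (sq_nonneg q),
          mul_nonneg (sub_nonneg.2 hpq2) (sq_nonneg p),
          sq_nonneg (p*x), sq_nonneg (p*y), sq_nonneg (p*q)]
      have h4 : (p^2+q^2)*(x^2+y^2+p^2)^2 ≤ 4*p^2*((x^2+y^2+q^2)*(x^2+y^2+p^2)) := by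
        nlinarith [mul_le_mul_of_nonneg_left base (by positivity : (0:ℝ) ≤ x^2+y^2+p^2)]
      nlinarith [mul_nonneg (sub_nonneg.2 huv) (sub_nonneg.2 hW),
        mul_nonneg (sq_nonneg y) (sub_nonneg.2 h4)]
  · rcases le_total q rr with hc2 | hc2
    · -- s = q, r2 ≥ q^2
      have hr2q : q^2 ≤ x^2+y^2 := by nlinarith [hr2, hc2, hq, hrpos]
      have hpq2 : p^2 ≤ q^2 := by nlinarith
      refine ⟨q, hpq, le_refl q, red q hq ?_⟩
      rcases le_total ((x^2+y^2+q^2)^2) (8*y^2*q^2) with hW | hW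
      · have hP : 0 ≤ (x^2+y^2+q^2)*(x^2+y^2+p^2) - 2*y^2*(p^2+q^2) := by
          nlinarith [mul_nonneg (sub_nonneg.2 hr2q) (sub_nonneg.2 (hpq2.trans hr2q)),
            sq_nonneg (x*(q-p)), mul_pos hp hq, sq_nonneg x]
        nlinarith [mul_nonneg hg0 (sub_nonneg.2 hW), mul_nonneg hP (sq_nonneg (x^2+y^2+q^2))]
      · have base : (p^2+q^2)*(x^2+y^2+q^2) ≤ 4*q^2*(x^2+y^2+p^2) := by
          nlinarith [mul_nonneg (sub_nonneg.2 hr2q) (sq_nonneg q),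
            mul_nonneg (sub_nonneg.2 hpq2) (by positivity : (0:ℝ) ≤ x^2+y^2),
            sq_nonneg (q*x), sq_nonneg (q*y), sq_nonneg (p*q)]
        have h4 : (p^2+q^2)*(x^2+y^2+q^2)^2 ≤ 4*q^2*((x^2+y^2+q^2)*(x^2+y^2+p^2)) := by
          nlinarith [mul_le_mul_of_nonneg_left base (by positivity : (0:ℝ) ≤ x^2+y^2+q^2)]
        nlinarith [mul_nonneg (sub_nonneg.2 huv) (sub_nonneg.2 hW),
          mul_nonneg (sq_nonneg y) (sub_nonneg.2 h4)]
    · -- s = rr, p ≤ rr ≤ q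
      refine ⟨rr, hc1, hc2, red rr hrpos ?_⟩
      rw [hr2]
      rcases le_total (x^2) (y^2) with hxy | hxy
      · nlinarith [
          mul_nonneg (mul_nonneg (by positivity : (0:ℝ) ≤ x^2+y^2)
            (by linarith [hgR] : (0:ℝ) ≤ g + ((x^2+y^2-p^2)*(x^2+y^2-q^2)+4*p*q*x^2)))
            (sub_nonneg.2 hxy),
          mul_nonneg (mul_nonneg (by positivity : (0:ℝ) ≤ x^2+y^2) (sq_nonneg x))
            (sq_nonneg (x^2+y^2-p*q)),
          mul_nonneg (mul_nonneg (by positivity : (0:ℝ) ≤ (x^2+y^2)*(p*q)) (sq_nonneg x))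
            (sq_nonneg x)]
      · nlinarith [
          mul_nonneg (mul_nonneg (by positivity : (0:ℝ) ≤ x^2+y^2)
            (sub_nonneg.2 huv)) (sub_nonneg.2 hxy),
          mul_nonneg (mul_nonneg (sq_nonneg y) (by positivity : (0:ℝ) ≤ x^2+y^2))
            (by positivity : (0:ℝ) ≤ (x^2+y^2)^2 + p^2*q^2)]

/-- Inversion `z ↦ -1/z` on the upper half-plane. -/
noncomputable def Jmap (z : ℍ) : ℍ :=
  UpperHalfPlane.mk (-(z : ℂ))⁻¹ (by
    rw [Complex.inv_im, Complex.neg_im, Complex.normSq_neg, neg_neg]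
    exact div_pos z.im_pos (Complex.normSq_pos.2 z.ne_zero))

lemma Jmap_coe (z : ℍ) : (Jmap z : ℂ) = (-(z : ℂ))⁻¹ := rfl

lemma Jmap_im (z : ℍ) : (Jmap z).im = z.im / Complex.normSq (z : ℂ) := by
  have h : (Jmap z).im = ((-(z : ℂ))⁻¹).im := rfl
  rw [h, Complex.inv_im, Complex.neg_im, Complex.normSq_neg, neg_neg, UpperHalfPlane.coe_im]

lemma Jmap_re (z : ℍ) : (Jmap z).re = -z.re / Complex.normSq (z : ℂ) := by
  have h : (Jmap z).re = ((-(z : ℂ))⁻¹).re := rfl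
  rw [h, Complex.inv_re, Complex.neg_re, Complex.normSq_neg, UpperHalfPlane.coe_re]

lemma Jmap_Jmap (z : ℍ) : Jmap (Jmap z) = z := by
  apply UpperHalfPlane.ext
  rw [Jmap_coe, Jmap_coe]
  simp [inv_neg]

lemma isometry_Jmap : Isometry Jmap := by
  apply Isometry.of_dist_eq
  intro z w
  have hz : (z : ℂ) ≠ 0 := z.ne_zero
  have hw : (w : ℂ) ≠ 0 := w.ne_zero
  have habs : 0 < ‖(z:ℂ)‖ * ‖(w:ℂ)‖ := mul_pos (norm_pos_iff.mpr hz) (norm_pos_iff.mpr hw)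
  have him : 0 < z.im * w.im := mul_pos z.im_pos w.im_pos
  have h1 : dist (Jmap z : ℂ) (Jmap w : ℂ) = dist (z : ℂ) w / (‖(z:ℂ)‖ * ‖(w:ℂ)‖) := by
    rw [Jmap_coe, Jmap_coe, Complex.dist_eq, Complex.dist_eq]
    have h2 : (-(z:ℂ))⁻¹ - (-(w:ℂ))⁻¹ = ((z:ℂ) - w) / (z * w) := by
      field_simp [hz, hw]
      ring
    rw [h2, norm_div, norm_mul]
  have h3 : ((Jmap z).im * (Jmap w).im) = (z.im * w.im) / (‖(z:ℂ)‖ * ‖(w:ℂ)‖)^2 := by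
    rw [Jmap_im, Jmap_im, mul_pow, ← Complex.normSq_eq_norm_sq, ← Complex.normSq_eq_norm_sq]
    field_simp
  rw [UpperHalfPlane.dist_eq, UpperHalfPlane.dist_eq, h1, h3, Real.sqrt_div him.le,
    Real.sqrt_sq habs.le]
  have hS : 0 < Real.sqrt (z.im * w.im) := Real.sqrt_pos.2 him
  congr 2
  rw [div_div]
  congr 1
  rw [mul_comm (‖(z:ℂ)‖ * ‖(w:ℂ)‖), mul_assoc,
    div_mul_cancel₀ _ habs.ne']

/-- An isometric bijection of `ℍ` mapping two given distinct points to points with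
equal real part. -/
lemma exists_isometry_re_eq (A B : ℍ) :
    ∃ f : ℍ → ℍ, Isometry f ∧ Function.Surjective f ∧ (f A).re = (f B).re := by
  rcases eq_or_ne A.re B.re with hre | hre
  · exact ⟨id, isometry_id, Function.surjective_id, hre⟩
  · obtain ⟨e, hedef⟩ : ∃ e : ℝ, e = (A.re^2 + A.im^2 - B.re^2 - B.im^2) / (2*(A.re - B.re)) :=
      ⟨_, rfl⟩
    have hAB : A.re - B.re ≠ 0 := sub_ne_zero.2 hre
    have hcirc : (B.re - e)^2 + B.im^2 = (A.re - e)^2 + A.im^2 := by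
      rw [hedef]
      field_simp
      ring
    obtain ⟨ρ, hρdef⟩ : ∃ ρ : ℝ, ρ = Real.sqrt ((A.re - e)^2 + A.im^2) := ⟨_, rfl⟩
    have hρpos : 0 < ρ := hρdef ▸ Real.sqrt_pos.2 (by positivity)
    have hρA : (A.re - e)^2 + A.im^2 = ρ^2 := by
      rw [hρdef, Real.sq_sqrt (by positivity)]
    have hρB : (B.re - e)^2 + B.im^2 = ρ^2 := by rw [hcirc, hρA]
    obtain ⟨u, hudef⟩ : ∃ u : ℝ, u = e - ρ := ⟨_, rfl⟩
    refine ⟨fun z => Jmap ((-u) +ᵥ z), (isometry_Jmap.comp (isometry_real_vadd (-u))),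
      Function.RightInverse.surjective (g := fun z => u +ᵥ Jmap z) (fun z => ?_), ?_⟩
    · show Jmap ((-u) +ᵥ (u +ᵥ Jmap z)) = z
      have h : (-u) +ᵥ (u +ᵥ Jmap z) = Jmap z := by
        apply UpperHalfPlane.ext
        rw [coe_vadd, coe_vadd]
        push_cast
        ring
      rw [h, Jmap_Jmap]
    · -- real parts computation
      have key : ∀ z : ℍ, (z.re - e)^2 + z.im^2 = ρ^2 →
          (Jmap ((-u) +ᵥ z)).re = -1/(2*ρ) := by
        intro z hzc
        rw [Jmap_re]
        have hre' : ((-u) +ᵥ z).re = z.re - u := by rw [vadd_re]; ring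
        have him' : ((-u) +ᵥ z).im = z.im := vadd_im (-u) z
        have hns : Complex.normSq (((-u) +ᵥ z : ℍ) : ℂ) = (z.re - u)^2 + z.im^2 := by
          simp only [Complex.normSq_apply, UpperHalfPlane.coe_re, UpperHalfPlane.coe_im,
            hre', him']
          ring
        have hid : (z.re - u)^2 + z.im^2 = 2*ρ*(z.re - u) := by
          rw [hudef]
          linear_combination hzc
        have hzu : 0 < z.re - u := by nlinarith [z.im_pos, hid, hρpos, sq_nonneg (z.re - u)]
        rw [hre', hns, hid]
        field_simp
      rw [key A hρA, key B hρB]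

/-- cosh of the hyperbolic distance, in coordinates. -/
lemma cosh_dist_coords (z w : ℍ) :
    Real.cosh (dist z w) = ((z.re - w.re)^2 + z.im^2 + w.im^2) / (2 * z.im * w.im) := by
  rw [UpperHalfPlane.cosh_dist]
  have h1 : dist (z : ℂ) (w : ℂ) ^ 2 = (z.re - w.re)^2 + (z.im - w.im)^2 := by
    rw [Complex.dist_eq_re_im, Real.sq_sqrt (by positivity)]
    simp [coe_re, coe_im]
  rw [h1]
  have h2 := z.im_pos
  have h3 := w.im_pos
  field_simp
  ring

lemma core (A B C : ℍ) (hre : A.re = B.re) (him : A.im ≤ B.im) (hAC : A ≠ C) (hBC : B ≠ C) :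
    Real.sin (Real.arccos
        ((Real.cosh (dist B C) * Real.cosh (dist A C) - Real.cosh (dist A B)) /
          (Real.sinh (dist B C) * Real.sinh (dist A C))) / 2) *
      Real.cosh (Metric.infDist C {Z : ℍ | dist A Z + dist Z B = dist A B}) ≤ 1 := by
  set p : ℝ := A.im with hpdef
  set q : ℝ := B.im with hqdef
  set y : ℝ := C.im with hydef
  set x : ℝ := C.re - A.re with hxdef
  have hp : 0 < p := A.im_pos
  have hq : 0 < q := B.im_pos
  have hy : 0 < y := C.im_pos
  have hca : Real.cosh (dist B C) = (x^2+y^2+q^2)/(2*y*q) := by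
    rw [cosh_dist_coords B C, ← hre, hxdef, ← hydef, ← hqdef,
      div_eq_div_iff (by positivity) (by positivity)]
    ring
  have hcb : Real.cosh (dist A C) = (x^2+y^2+p^2)/(2*y*p) := by
    rw [cosh_dist_coords A C, hxdef, ← hydef, ← hpdef,
      div_eq_div_iff (by positivity) (by positivity)]
    ring
  have hcc : Real.cosh (dist A B) = (p^2+q^2)/(2*p*q) := by
    rw [cosh_dist_coords A B, hre, ← hpdef, ← hqdef,
      div_eq_div_iff (by positivity) (by positivity)]
    ring
  set σ : ℝ := Real.sinh (dist B C) * Real.sinh (dist A C) with hσdef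
  have hσpos : 0 < σ := mul_pos
    (Real.sinh_pos_iff.2 (dist_pos.2 hBC)) (Real.sinh_pos_iff.2 (dist_pos.2 hAC))
  have hσsq : σ ^ 2 = (((x^2+y^2+q^2)/(2*y*q))^2 - 1) * (((x^2+y^2+p^2)/(2*y*p))^2 - 1) := by
    rw [hσdef, ← hca, ← hcb, mul_pow, Real.sinh_sq, Real.sinh_sq]
  obtain ⟨s, hps, hsq, hineq⟩ := key_ineq x y p q σ hy hp hq him hσpos.le hσsq
  have hspos : 0 < s := lt_of_lt_of_le hp hps
  set Z : ℍ := UpperHalfPlane.mk ⟨A.re, s⟩ (by simpa using hspos) with hZdef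
  have hZre : Z.re = A.re := rfl
  have hZim : Z.im = s := rfl
  have hZmem : Z ∈ {Z : ℍ | dist A Z + dist Z B = dist A B} := by
    have h1 : dist A Z = Real.log s - Real.log p := by
      rw [UpperHalfPlane.dist_of_re_eq hZre.symm, hZim, ← hpdef, Real.dist_eq,
        abs_sub_comm, abs_of_nonneg (sub_nonneg.2 (Real.log_le_log hp hps))]
    have h2 : dist Z B = Real.log q - Real.log s := by
      rw [UpperHalfPlane.dist_of_re_eq (by rw [hZre, hre] : Z.re = B.re), hZim, ← hqdef,
        Real.dist_eq, abs_sub_comm, abs_of_nonneg (sub_nonneg.2 (Real.log_le_log hspos hsq))]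
    have h3 : dist A B = Real.log q - Real.log p := by
      rw [UpperHalfPlane.dist_of_re_eq hre, ← hpdef, ← hqdef, Real.dist_eq,
        abs_sub_comm, abs_of_nonneg (sub_nonneg.2 (Real.log_le_log hp him))]
    simp only [Set.mem_setOf_eq, h1, h2, h3]
    ring
  have hdle : Metric.infDist C {Z : ℍ | dist A Z + dist Z B = dist A B} ≤ dist C Z :=
    Metric.infDist_le_dist_of_mem hZmem
  have hcoshd : Real.cosh (Metric.infDist C {Z : ℍ | dist A Z + dist Z B = dist A B})
      ≤ Real.cosh (dist C Z) := by
    apply Real.cosh_le_cosh.2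
    rw [abs_of_nonneg (Metric.infDist_nonneg), abs_of_nonneg dist_nonneg]
    exact hdle
  have hcZ : Real.cosh (dist C Z) = (x^2+y^2+s^2)/(2*y*s) := by
    rw [cosh_dist_coords C Z, hZre, hZim, hxdef, ← hydef,
      div_eq_div_iff (by positivity) (by positivity)]
  set E : ℝ := (Real.cosh (dist B C) * Real.cosh (dist A C) - Real.cosh (dist A B)) / σ with hEdef
  rcases le_total 1 E with hE1 | hE1
  · rw [Real.arccos_eq_zero.2 hE1]
    norm_num
  · have hEm1 : -1 ≤ E := by
      have htri : dist A B ≤ dist A C + dist C B := dist_triangle A C B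
      have hch : Real.cosh (dist A B) ≤ Real.cosh (dist A C + dist C B) := by
        apply Real.cosh_le_cosh.2
        rw [abs_of_nonneg dist_nonneg, abs_of_nonneg (by positivity)]
        exact htri
      rw [Real.cosh_add, dist_comm C B] at hch
      rw [hEdef, le_div_iff₀ hσpos, hσdef]
      nlinarith [hch]
    have hcos : Real.cos (Real.arccos E) = E := Real.cos_arccos hEm1 hE1
    have hsin : Real.sin (Real.arccos E / 2) = Real.sqrt ((1 - E) / 2) := by
      rw [Real.sin_half_eq_sqrt (Real.arccos_nonneg E)
        (by linarith [Real.arccos_le_pi E, Real.pi_pos]), hcos]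
    rw [hsin]
    have hW : (σ + (p^2+q^2)/(2*p*q) - ((x^2+y^2+q^2)/(2*y*q)) * ((x^2+y^2+p^2)/(2*y*p)))
        = σ * (1 - E) := by
      rw [hEdef, hca, hcb, hcc]
      field_simp
      ring
    have h1 : (1 - E) * Real.cosh (dist C Z) ^ 2 ≤ 2 := by
      rw [hW] at hineq
      rw [hcZ]
      have h2 : σ * ((1 - E) * ((x^2+y^2+s^2)/(2*y*s))^2) ≤ σ * 2 := by
        calc σ * ((1 - E) * ((x^2+y^2+s^2)/(2*y*s))^2)
            = σ * (1 - E) * ((x^2+y^2+s^2)/(2*y*s))^2 := by ring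
          _ ≤ 2 * σ := hineq
          _ = σ * 2 := by ring
      exact le_of_mul_le_mul_left h2 hσpos
    set t : ℝ := Real.sqrt ((1 - E) / 2) * Real.cosh (dist C Z) with htdef
    have ht0 : 0 ≤ t := mul_nonneg (Real.sqrt_nonneg _) (Real.cosh_pos _).le
    have ht2 : t ^ 2 ≤ 1 := by
      rw [htdef, mul_pow, Real.sq_sqrt (by linarith : (0:ℝ) ≤ (1 - E)/2)]
      linarith
    have ht1 : t ≤ 1 := by nlinarith [ht0, ht2]
    calc Real.sqrt ((1 - E) / 2) *
          Real.cosh (Metric.infDist C {Z : ℍ | dist A Z + dist Z B = dist A B})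
        ≤ t := mul_le_mul_of_nonneg_left hcoshd (Real.sqrt_nonneg _)
      _ ≤ 1 := ht1


lemma coreRE (A B C : UpperHalfPlane) (hre : A.re = B.re) (hAC : A ≠ C) (hBC : B ≠ C) :
    Real.sin (Real.arccos
        ((Real.cosh (dist B C) * Real.cosh (dist A C) - Real.cosh (dist A B)) /
          (Real.sinh (dist B C) * Real.sinh (dist A C))) / 2) *
      Real.cosh (Metric.infDist C {Z : ℍ | dist A Z + dist Z B = dist A B}) ≤ 1 := by
  rcases le_total A.im B.im with him | him
  · exact core A B C hre him hAC hBC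
  · have h := core B A C hre.symm him hBC hAC
    have hset : {Z : ℍ | dist B Z + dist Z A = dist B A}
        = {Z : ℍ | dist A Z + dist Z B = dist A B} := by
      ext W
      simp only [Set.mem_setOf_eq]
      rw [dist_comm B W, dist_comm W A, dist_comm B A]
      constructor <;> intro h' <;> linarith
    rw [hset, dist_comm B A,
      mul_comm (Real.cosh (dist A C)) (Real.cosh (dist B C)),
      mul_comm (Real.sinh (dist A C)) (Real.sinh (dist B C))] at h
    exact h

/-- In the hyperbolic plane (upper half-plane model), for a geodesic triangle
with vertices `A B C`, angle `θ` at `C` (defined through the hyperbolic law of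
cosines) and distance `d` from `C` to the side opposite `C` (the geodesic
segment from `A` to `B`), one has `sin (θ/2) * cosh d ≤ 1`. -/
theorem stmt_3 (A B C : UpperHalfPlane) (hAC : A ≠ C) (hBC : B ≠ C)
    (a b c θ d : ℝ)
    (ha : a = dist B C) (hb : b = dist A C) (hc : c = dist A B)
    (hθ : θ = Real.arccos
      ((Real.cosh a * Real.cosh b - Real.cosh c) / (Real.sinh a * Real.sinh b)))
    (hd : d = Metric.infDist C {Z : UpperHalfPlane | dist A Z + dist Z B = dist A B}) :
    Real.sin (θ / 2) * Real.cosh d ≤ 1 := by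
  subst hθ hd ha hb hc
  obtain ⟨f, hiso, hsurj, hre⟩ := exists_isometry_re_eq A B
  have hfAC : f A ≠ f C := fun h => hAC (hiso.injective h)
  have hfBC : f B ≠ f C := fun h => hBC (hiso.injective h)
  have h := coreRE (f A) (f B) (f C) hre hfAC hfBC
  have hS : {Z : ℍ | dist (f A) Z + dist Z (f B) = dist (f A) (f B)}
      = f '' {Z : ℍ | dist A Z + dist Z B = dist A B} := by
    ext W
    simp only [Set.mem_setOf_eq, Set.mem_image]
    constructor
    · intro hW
      obtain ⟨Z, rfl⟩ := hsurj W
      rw [hiso.dist_eq A Z, hiso.dist_eq Z B, hiso.dist_eq A B] at hW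
      exact ⟨Z, hW, rfl⟩
    · rintro ⟨Z, hZ, rfl⟩
      rw [hiso.dist_eq A Z, hiso.dist_eq Z B, hiso.dist_eq A B]
      exact hZ
  rw [hS, Metric.infDist_image hiso, hiso.dist_eq B C, hiso.dist_eq A C,
    hiso.dist_eq A B] at h
  exact h
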